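/- Let k be a field and n ≥ 1. For any pair of complete flags (F_0 ⊂ ⋯ ⊂ F_n) and (F'_0 ⊂ ⋯ ⊂ F'_n) in k^n there exists a unique permutation σ ∈ S_n such that for all 0 ≤ i, j ≤ n one has dim(F_i ∩ F'_j) = #{a : 1 ≤ a ≤ i and σ(a) ≤ j}. (Relative position of two complete flags.) -/

import Mathlib

/-- A complete flag in `k^n`: a chain `0 = F 0 ⊆ F 1 ⊆ ⋯ ⊆ F n = k^n` of linear
subspaces with `dim (F i) = i` for all `i`. -/
def IsCompleteFlag {k : Type*} [Field k] {n : ℕ}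
    (F : Fin (n + 1) → Submodule k (Fin n → k)) : Prop :=
  Monotone F ∧ F 0 = ⊥ ∧ F (Fin.last n) = ⊤ ∧
    ∀ i : Fin (n + 1), Module.finrank k (F i) = (i : ℕ)

open Module Finset

section aux
variable {k : Type*} [Field k] {V : Type*} [AddCommGroup V] [Module k V] [FiniteDimensional k V]

lemma flag_aux_step (A A' B : Submodule k V) (h : A ≤ A') :
    finrank k ↥(A' ⊓ B) + finrank k A ≤ finrank k A' + finrank k ↥(A ⊓ B) := by
  have key := Submodule.finrank_sup_add_finrank_inf_eq (A' ⊓ B) A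
  have h1 : (A' ⊓ B) ⊓ A = A ⊓ B := by
    apply le_antisymm
    · exact le_inf inf_le_right (inf_le_of_left_le inf_le_right)
    · exact le_inf (le_inf (inf_le_left.trans h) inf_le_right) inf_le_left
  have h2 : finrank k ↥((A' ⊓ B) ⊔ A) ≤ finrank k A' :=
    Submodule.finrank_mono (sup_le inf_le_left h)
  rw [h1] at key
  omega

lemma flag_aux_supermod (A A' B B' : Submodule k V) (hA : A ≤ A') (hB : B ≤ B') :
    finrank k ↥(A' ⊓ B) + finrank k ↥(A ⊓ B') ≤
      finrank k ↥(A' ⊓ B') + finrank k ↥(A ⊓ B) := by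
  have key := Submodule.finrank_sup_add_finrank_inf_eq (A' ⊓ B) (A ⊓ B')
  have h1 : (A' ⊓ B) ⊓ (A ⊓ B') = A ⊓ B := by
    apply le_antisymm
    · exact le_inf (inf_le_of_right_le inf_le_left) (inf_le_of_left_le inf_le_right)
    · exact le_inf (le_inf (inf_le_left.trans hA) inf_le_right)
        (le_inf inf_le_left (inf_le_right.trans hB))
  have h2 : finrank k ↥((A' ⊓ B) ⊔ (A ⊓ B')) ≤ finrank k ↥(A' ⊓ B') :=
    Submodule.finrank_mono (sup_le (inf_le_inf_left _ hB) (inf_le_inf_right _ hA))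
  rw [h1] at key
  omega

end aux

lemma card_filter_step {n : ℕ} (P : Fin n → Prop) [DecidablePred P] (a : Fin n) :
    (Finset.univ.filter fun b : Fin n => (b : ℕ) < (a : ℕ) + 1 ∧ P b).card =
      (Finset.univ.filter fun b : Fin n => (b : ℕ) < (a : ℕ) ∧ P b).card +
        (if P a then 1 else 0) := by
  classical
  have hsplit : (Finset.univ.filter fun b : Fin n => (b : ℕ) < (a : ℕ) + 1 ∧ P b) =
      (Finset.univ.filter fun b : Fin n => (b : ℕ) < (a : ℕ) ∧ P b) ∪
        (Finset.univ.filter fun b : Fin n => b = a ∧ P b) := by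
    ext b
    simp only [Finset.mem_filter, Finset.mem_union, Finset.mem_univ, true_and, Fin.ext_iff]
    constructor
    · rintro ⟨hb, hP⟩
      rcases Nat.lt_or_ge (b : ℕ) (a : ℕ) with h | h
      · exact Or.inl ⟨h, hP⟩
      · exact Or.inr ⟨by omega, hP⟩
    · rintro (⟨hb, hP⟩ | ⟨hb, hP⟩) <;> exact ⟨by omega, hP⟩
  have hdisj : Disjoint (Finset.univ.filter fun b : Fin n => (b : ℕ) < (a : ℕ) ∧ P b)
      (Finset.univ.filter fun b : Fin n => b = a ∧ P b) := by
    rw [Finset.disjoint_left]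
    intro b hb hb'
    simp only [Finset.mem_filter] at hb hb'
    rcases hb'.2.1 with rfl
    omega
  rw [hsplit, Finset.card_union_of_disjoint hdisj]
  congr 1
  by_cases h : P a
  · rw [if_pos h]
    have : (Finset.univ.filter fun b : Fin n => b = a ∧ P b) = {a} := by
      ext b
      simp only [Finset.mem_filter, Finset.mem_univ, true_and, Finset.mem_singleton]
      constructor
      · rintro ⟨rfl, _⟩; rfl
      · rintro rfl; exact ⟨rfl, h⟩
    rw [this, Finset.card_singleton]
  · rw [if_neg h]
    rw [Finset.card_eq_zero, Finset.filter_eq_empty_iff]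
    rintro b - ⟨rfl, hP⟩
    exact h hP


/-- Relative position of two complete flags: for any pair of complete flags `F, F'` in
`k^n` there is a unique permutation `σ ∈ S_n` with
`dim (F i ∩ F' j) = #{a | a < i and σ a < j}` (with `0`-based indexing of `S_n`,
corresponding to `#{a | 1 ≤ a ≤ i, σ(a) ≤ j}` with `1`-based indexing) for all `i, j`. -/
theorem relative_position_of_flags {k : Type*} [Field k] {n : ℕ} (hn : 1 ≤ n)
    (F F' : Fin (n + 1) → Submodule k (Fin n → k))
    (hF : IsCompleteFlag F) (hF' : IsCompleteFlag F') :
    ∃! σ : Equiv.Perm (Fin n),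
      ∀ i j : Fin (n + 1),
        Module.finrank k ↥(F i ⊓ F' j) =
          (Finset.univ.filter fun a : Fin n =>
            (a : ℕ) < (i : ℕ) ∧ (σ a : ℕ) < (j : ℕ)).card := by
  classical
  obtain ⟨hFm, hF0, hFt, hFr⟩ := hF
  obtain ⟨hF'm, hF'0, hF't, hF'r⟩ := hF'
  set d : Fin (n + 1) → Fin (n + 1) → ℕ := fun i j => finrank k ↥(F i ⊓ F' j) with hd
  -- basic monotonicity and step bounds
  have dmono1 : ∀ (i i' j : Fin (n + 1)), i ≤ i' → d i j ≤ d i' j := fun i i' j h =>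
    Submodule.finrank_mono (inf_le_inf_right _ (hFm h))
  have hcsle : ∀ a : Fin n, a.castSucc ≤ a.succ := fun a =>
    le_of_lt Fin.castSucc_lt_succ
  have dstep : ∀ (a : Fin n) (j : Fin (n + 1)),
      d a.succ j + (a : ℕ) ≤ (a : ℕ) + 1 + d a.castSucc j := by
    intro a j
    have h := flag_aux_step (F a.castSucc) (F a.succ) (F' j) (hFm (hcsle a))
    rw [hFr a.castSucc, hFr a.succ, Fin.coe_castSucc, Fin.val_succ] at h
    exact h
  have dsupermod : ∀ (a : Fin n) (j j' : Fin (n + 1)), j ≤ j' →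
      d a.succ j + d a.castSucc j' ≤ d a.succ j' + d a.castSucc j := fun a j j' h =>
    flag_aux_supermod (F a.castSucc) (F a.succ) (F' j) (F' j') (hFm (hcsle a)) (hF'm h)
  -- boundary values
  have d0 : ∀ j, d 0 j = 0 := by
    intro j
    show finrank k ↥(F 0 ⊓ F' j) = 0
    rw [hF0, bot_inf_eq]
    exact finrank_bot k _
  have dlast : ∀ j, d (Fin.last n) j = (j : ℕ) := by
    intro j
    show finrank k ↥(F (Fin.last n) ⊓ F' j) = (j : ℕ)
    rw [hFt, top_inf_eq]
    exact hF'r j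
  have dj0 : ∀ i, d i 0 = 0 := by
    intro i
    show finrank k ↥(F i ⊓ F' 0) = 0
    rw [hF'0, inf_bot_eq]
    exact finrank_bot k _
  have djlast : ∀ i, d i (Fin.last n) = (i : ℕ) := by
    intro i
    show finrank k ↥(F i ⊓ F' (Fin.last n)) = (i : ℕ)
    rw [hF't, inf_top_eq]
    exact hFr i
  -- the jump predicate
  set Q : Fin n → Fin (n + 1) → Prop := fun a j => d a.castSucc j < d a.succ j with hQ
  have Qmono : ∀ (a : Fin n) (j j' : Fin (n + 1)), j ≤ j' → Q a j → Q a j' := by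
    intro a j j' h hj
    have h1 := dsupermod a j j' h
    simp only [hQ] at hj ⊢
    omega
  have Qlast : ∀ a : Fin n, Q a (Fin.last n) := by
    intro a
    simp only [hQ, djlast, Fin.val_succ, Fin.coe_castSucc]
    omega
  -- existence of the jump point
  have hex : ∀ a : Fin n, ∃ t : ℕ, ∃ h : t < n,
      Q a ⟨t + 1, Nat.succ_lt_succ h⟩ := by
    intro a
    refine ⟨n - 1, by omega, ?_⟩
    have : (⟨n - 1 + 1, Nat.succ_lt_succ (by omega)⟩ : Fin (n + 1)) = Fin.last n := by
      rw [Fin.ext_iff]; simp [Fin.val_last]; omega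
    rw [this]
    exact Qlast a
  have hfindlt : ∀ a : Fin n, Nat.find (hex a) < n := by
    intro a
    have := (Nat.find_spec (hex a)).1
    omega
  obtain ⟨σf, hvals⟩ : ∃ f : Fin n → Fin n, ∀ a, (f a : ℕ) = Nat.find (hex a) :=
    ⟨fun a => ⟨Nat.find (hex a), hfindlt a⟩, fun a => rfl⟩
  -- characterization of the jump
  have Qiff : ∀ (a : Fin n) (j : Fin (n + 1)), Q a j ↔ (σf a : ℕ) < (j : ℕ) := by
    intro a j
    rw [hvals]
    constructor
    · intro hQj
      by_contra hc
      push_neg at hc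
      rcases Nat.eq_zero_or_pos (j : ℕ) with h0 | hpos
      · have : j = 0 := by rw [Fin.ext_iff]; simpa using h0
        rw [this] at hQj
        simp only [hQ, dj0] at hQj
        omega
      · obtain ⟨t, ht⟩ : ∃ t, (j : ℕ) = t + 1 := ⟨(j : ℕ) - 1, by omega⟩
        have htn : t < n := by have := j.isLt; omega
        have hlt : t < Nat.find (hex a) := by omega
        have hmin := Nat.find_min (hex a) hlt
        have hj : (⟨t + 1, Nat.succ_lt_succ htn⟩ : Fin (n + 1)) = j := by
          rw [Fin.ext_iff]; simp; omega
        exact hmin ⟨htn, by rw [hj]; exact hQj⟩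
    · intro hlt
      have hspec := (Nat.find_spec (hex a)).2
      refine Qmono a ⟨Nat.find (hex a) + 1, Nat.succ_lt_succ (hfindlt a)⟩ j ?_ hspec
      rw [Fin.le_def]
      exact hlt
  -- the step formula
  have dstepf : ∀ (a : Fin n) (j : Fin (n + 1)),
      d a.succ j = d a.castSucc j + (if (σf a : ℕ) < (j : ℕ) then 1 else 0) := by
    intro a j
    have h1 := dmono1 a.castSucc a.succ j (hcsle a)
    have h2 := dstep a j
    by_cases h : (σf a : ℕ) < (j : ℕ)
    · rw [if_pos h]
      have := (Qiff a j).mpr h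
      simp only [hQ] at this
      omega
    · rw [if_neg h]
      have : ¬ Q a j := fun hq => h ((Qiff a j).mp hq)
      simp only [hQ] at this
      omega
  -- counting formula for σf
  have hcount : ∀ (i j : Fin (n + 1)),
      d i j = (Finset.univ.filter fun a : Fin n =>
        (a : ℕ) < (i : ℕ) ∧ (σf a : ℕ) < (j : ℕ)).card := by
    intro i j
    induction i using Fin.induction with
    | zero =>
      rw [d0]
      symm
      rw [Finset.card_eq_zero, Finset.filter_eq_empty_iff]
      rintro a - ⟨h, -⟩
      simp at h
    | succ a ih =>
      have hstep := card_filter_step (fun b : Fin n => (σf b : ℕ) < (j : ℕ)) a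
      rw [dstepf a j, ih]
      simp only [Fin.val_succ, Fin.coe_castSucc] at *
      rw [hstep]
  -- counting of initial fibers
  have hg : ∀ t : ℕ, t < n →
      (Finset.univ.filter fun a : Fin n => (σf a : ℕ) < t + 1).card = t + 1 := by
    intro t ht
    have := hcount (Fin.last n) ⟨t + 1, Nat.succ_lt_succ ht⟩
    rw [dlast] at this
    simp only [Fin.val_last] at this
    have heq : (Finset.univ.filter fun a : Fin n =>
        (a : ℕ) < n ∧ (σf a : ℕ) < t + 1) =
        (Finset.univ.filter fun a : Fin n => (σf a : ℕ) < t + 1) := by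
      refine Finset.filter_congr fun a _ => ?_
      simp [a.isLt]
    rw [heq] at this
    exact this.symm
  -- injectivity of σf
  have hinj : Function.Injective σf := by
    intro a a' h
    rcases Nat.eq_zero_or_pos ((σf a : ℕ)) with h0 | hpos
    · have hcard := hg 0 hn
      have hmem : a ∈ Finset.univ.filter fun b : Fin n => (σf b : ℕ) < 0 + 1 := by
        simp only [Finset.mem_filter, Finset.mem_univ, true_and]; omega
      have hmem' : a' ∈ Finset.univ.filter fun b : Fin n => (σf b : ℕ) < 0 + 1 := by
        simp only [Finset.mem_filter, Finset.mem_univ, true_and]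
        rw [← h]; omega
      exact Finset.card_le_one.mp (le_of_eq hcard) a hmem a' hmem'
    · obtain ⟨s, hs⟩ : ∃ s, (σf a : ℕ) = s + 1 := ⟨(σf a : ℕ) - 1, by omega⟩
      have hs1 : s + 1 < n := by rw [← hs]; exact (σf a).isLt
      have hc1 := hg (s + 1) hs1
      have hc0 := hg s (by omega)
      set S1 := Finset.univ.filter fun b : Fin n => (σf b : ℕ) < s + 1 + 1 with hS1
      set S0 := Finset.univ.filter fun b : Fin n => (σf b : ℕ) < s + 1 with hS0
      have hsub : S0 ⊆ S1 := by
        rw [hS0, hS1]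
        exact Finset.monotone_filter_right _ (fun b hb => by omega)
      have hcard : (S1 \ S0).card = 1 := by
        rw [Finset.card_sdiff_of_subset hsub, hc1, hc0]
        omega
      have hmem : a ∈ S1 \ S0 := by
        rw [hS1, hS0]
        simp only [Finset.mem_sdiff, Finset.mem_filter, Finset.mem_univ, true_and]
        omega
      have hmem' : a' ∈ S1 \ S0 := by
        rw [hS1, hS0]
        simp only [Finset.mem_sdiff, Finset.mem_filter, Finset.mem_univ, true_and]
        rw [← h]
        omega
      exact Finset.card_le_one.mp (le_of_eq hcard) a hmem a' hmem'
  have hbij : Function.Bijective σf := Finite.injective_iff_bijective.mp hinj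
  refine ⟨Equiv.ofBijective σf hbij, ?_, ?_⟩
  · intro i j
    exact hcount i j
  · intro τ hτ
    apply Equiv.ext
    intro a
    have key : ∀ j : Fin (n + 1), ((τ a : ℕ) < (j : ℕ)) ↔ ((σf a : ℕ) < (j : ℕ)) := by
      intro j
      have h1 : d a.succ j = (Finset.univ.filter fun b : Fin n =>
          (b : ℕ) < (a : ℕ) + 1 ∧ (τ b : ℕ) < (j : ℕ)).card := by
        have h := hτ a.succ j
        simp only [Fin.val_succ] at h
        exact h
      have h2 : d a.castSucc j = (Finset.univ.filter fun b : Fin n =>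
          (b : ℕ) < (a : ℕ) ∧ (τ b : ℕ) < (j : ℕ)).card := by
        have h := hτ a.castSucc j
        simp only [Fin.coe_castSucc] at h
        exact h
      have h3 := card_filter_step (fun b : Fin n => ((τ b : ℕ)) < (j : ℕ)) a
      have h4 := dstepf a j
      rw [h1, h2, h3] at h4
      by_cases hσ : (σf a : ℕ) < (j : ℕ) <;> by_cases hτ' : (τ a : ℕ) < (j : ℕ) <;>
        simp [hσ, hτ'] at h4 ⊢
    have h1 : (τ a : ℕ) ≤ (σf a : ℕ) := by
      have := (key (σf a).succ).mpr (by simp [Fin.val_succ])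
      simpa [Fin.val_succ] using Nat.lt_succ_iff.mp this
    have h2 : (σf a : ℕ) ≤ (τ a : ℕ) := by
      have := (key (τ a).succ).mp (by simp [Fin.val_succ])
      simpa [Fin.val_succ] using Nat.lt_succ_iff.mp this
    show τ a = σf a
    rw [Fin.ext_iff]
    omega
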